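/- Let (C,⊗,I) be a small symmetric monoidal category. Define the functor iSeq : NC^op × NC → Set by iSeq(X,Y) = Σ_{M : ℕ → ob C} Π_{n∈ℕ} Hom_C(M_{n−1} ⊗ X_n, M_n ⊗ Y_n), with the convention M_{−1} = I, and with functorial action by pre- and post-composition with the components of morphisms of NC. Then iSeq is a fixpoint of the endofunctor (hom ⊡ −) of the functor category [NC^op × NC, Set], i.e., there is a natural isomorphism iSeq(X,Y) ≅ Σ_{M∈ob C} Hom_C(X₀, M ⊗ Y₀) × iSeq(M·tail X, tail Y) given by splitting off the first morphism, and iSeq is the terminal such fixpoint: equivalently, iSeq with this structure is a terminal coalgebra for (hom ⊡ −). -/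

import Mathlib

/-!
STATEMENT 2: Intensional sequences are the terminal coalgebra (and terminal fixpoint)
of the endofunctor `(hom ⊡ −)` of `[NCᵒᵖ × NC, Set]`.

Set-valued bifunctors on the product category `NC = Π_{n∈ℕ} C` are given elementwise
(`SetBifunctor`).  The endofunctor `(hom ⊡ −)` sends `Q` to
`(X,Y) ↦ Σ_{M ∈ C} Hom(X₀, M ⊗ Y₀) × Q(M·tail X, tail Y)`; its coalgebras and their
morphisms are spelled out elementwise.  The functor `iSeq` of intensional sequences,
with its structure map splitting off the first morphism, is a coalgebra whose structure
map is a bijection at every pair of sequences (a fixpoint), and it is terminal among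
all coalgebras (hence the terminal fixpoint).
-/

open CategoryTheory MonoidalCategory

namespace Stmt2

universe v u

variable (C : Type u) [Category.{v} C] [MonoidalCategory C] [SymmetricCategory C]

/-- Sequences of objects: the objects of `NC`. -/
abbrev Seq := ℕ → C

variable {C}

/-- `tail X = (X₁, X₂, …)`. -/
def tailSeq (X : Seq C) : Seq C := fun n => X (n + 1)

/-- `M·X = (M ⊗ X₀, X₁, X₂, …)`. -/
def consSeq (M : C) (X : Seq C) : Seq C := fun n =>
  match n with
  | 0 => M ⊗ X 0
  | k + 1 => X (k + 1)

variable (C) in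
/-- A `Set`-valued functor on `NCᵒᵖ × NC`, described elementwise: contravariant in the
first sequence, covariant in the second, with functorial action on the componentwise
morphisms of the product category `NC`. -/
structure SetBifunctor where
  obj : Seq C → Seq C → Type (max u v)
  map : ∀ {X' X Y Y' : Seq C},
    (∀ n, X' n ⟶ X n) → (∀ n, Y n ⟶ Y' n) → obj X Y → obj X' Y'
  map_id : ∀ (X Y : Seq C) (q : obj X Y),
    map (fun n => 𝟙 (X n)) (fun n => 𝟙 (Y n)) q = q
  map_comp : ∀ {X'' X' X Y Y' Y'' : Seq C}
    (u' : ∀ n, X'' n ⟶ X' n) (u : ∀ n, X' n ⟶ X n)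
    (v : ∀ n, Y n ⟶ Y' n) (v' : ∀ n, Y' n ⟶ Y'' n) (q : obj X Y),
    map (fun n => u' n ≫ u n) (fun n => v n ≫ v' n) q = map u' v' (map u v q)

/-- The object part of the endofunctor `(hom ⊡ −)`:
`(hom ⊡ Q)(X,Y) = Σ_{M ∈ C} Hom(X₀, M ⊗ Y₀) × Q(M·tail X, tail Y)`. -/
def PhiObj (Q : SetBifunctor C) (X Y : Seq C) : Type (max u v) :=
  Σ M : C, (X 0 ⟶ M ⊗ Y 0) × Q.obj (consSeq M (tailSeq X)) (tailSeq Y)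

/-- Whiskering a componentwise morphism by a memory object `M`:
`M·tail u : M·tail X' ⟶ M·tail X`. -/
def consHom (M : C) {X' X : Seq C} (u : ∀ n, X' n ⟶ X n) :
    ∀ n, consSeq M (tailSeq X') n ⟶ consSeq M (tailSeq X) n :=
  fun n =>
    match n with
    | 0 => M ◁ u 1
    | k + 1 => u (k + 2)

/-- Action of the endofunctor `(hom ⊡ −)` applied to `Q` on the morphisms of
`NCᵒᵖ × NC`. -/
def phiMap (Q : SetBifunctor C) {X' X Y Y' : Seq C}
    (u : ∀ n, X' n ⟶ X n) (v : ∀ n, Y n ⟶ Y' n) :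
    PhiObj Q X Y → PhiObj Q X' Y' :=
  fun p => ⟨p.1, u 0 ≫ p.2.1 ≫ (p.1 ◁ v 0),
    Q.map (consHom p.1 u) (fun n => v (n + 1)) p.2.2⟩

variable (C) in
/-- A coalgebra for the endofunctor `(hom ⊡ −)`: a `Set`-valued bifunctor on
`NCᵒᵖ × NC` with a natural transformation into its image under `(hom ⊡ −)`. -/
structure Coalg where
  Q : SetBifunctor C
  str : ∀ X Y, Q.obj X Y → PhiObj Q X Y
  natural : ∀ {X' X Y Y' : Seq C} (u : ∀ n, X' n ⟶ X n) (v : ∀ n, Y n ⟶ Y' n)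
    (q : Q.obj X Y), str X' Y' (Q.map u v q) = phiMap Q u v (str X Y q)

/-- A morphism of coalgebras for `(hom ⊡ −)`: a natural transformation commuting with
the structure maps. -/
structure CoalgHom (A B : Coalg C) where
  app : ∀ X Y, A.Q.obj X Y → B.Q.obj X Y
  natural : ∀ {X' X Y Y' : Seq C} (u : ∀ n, X' n ⟶ X n) (v : ∀ n, Y n ⟶ Y' n)
    (q : A.Q.obj X Y), app X' Y' (A.Q.map u v q) = B.Q.map u v (app X Y q)
  comm : ∀ (X Y : Seq C) (q : A.Q.obj X Y),
    B.str X Y (app X Y q) =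
      ⟨(A.str X Y q).1, (A.str X Y q).2.1, app _ _ (A.str X Y q).2.2⟩

/-- Intensional sequences:
`iSeq(X,Y) = Σ_{M : ℕ → C} Π_n Hom(M_{n-1} ⊗ X_n, M_n ⊗ Y_n)` with `M_{-1} = I`. -/
def ISeqObj (X Y : Seq C) : Type (max u v) :=
  Σ M : Seq C,
    ((𝟙_ C ⊗ X 0 : C) ⟶ M 0 ⊗ Y 0) ×
    ∀ n, ((M n ⊗ X (n + 1) : C) ⟶ M (n + 1) ⊗ Y (n + 1))

/-- Functorial action of `iSeq`: pre- and post-composition with the components. -/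
def ISeqMap {X' X Y Y' : Seq C} (u : ∀ n, X' n ⟶ X n) (v : ∀ n, Y n ⟶ Y' n) :
    ISeqObj X Y → ISeqObj X' Y' :=
  fun q =>
    ⟨q.1, (𝟙_ C ◁ u 0) ≫ q.2.1 ≫ (q.1 0 ◁ v 0),
      fun n => (q.1 n ◁ u (n + 1)) ≫ q.2.2 n ≫ (q.1 (n + 1) ◁ v (n + 1))⟩

variable (C) in
/-- The bifunctor `iSeq` of intensional sequences. -/
def ISeqBifunctor : SetBifunctor C where
  obj := ISeqObj
  map := ISeqMap
  map_id := by
    rintro X Y ⟨M, f0, f⟩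
    simp [ISeqMap] <;> rfl
  map_comp := by
    rintro X'' X' X Y Y' Y'' u' u v v' ⟨M, f0, f⟩
    simp [ISeqMap, MonoidalCategory.whiskerLeft_comp] <;> rfl

/-- The structure map of `iSeq`: splitting off the first morphism,
`iSeq(X,Y) ≅ Σ_{M ∈ C} Hom(X₀, M ⊗ Y₀) × iSeq(M·tail X, tail Y)`. -/
def ISeqStr (X Y : Seq C) : ISeqObj X Y → PhiObj (ISeqBifunctor C) X Y :=
  fun q =>
    ⟨q.1 0, (λ_ (X 0)).inv ≫ q.2.1,
      ⟨tailSeq q.1, (λ_ (q.1 0 ⊗ X 1)).hom ≫ q.2.2 0, fun n => q.2.2 (n + 1)⟩⟩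

variable (C) in
/-- `iSeq` as a coalgebra of `(hom ⊡ −)`. -/
def ISeqCoalg : Coalg C where
  Q := ISeqBifunctor C
  str := ISeqStr
  natural := by
    rintro X' X Y Y' u v ⟨M, f0, f⟩
    simp [ISeqStr, ISeqMap, phiMap, ISeqBifunctor, consHom, consSeq, tailSeq] <;> rfl

section Helpers

lemma eqToHom_self {a : C} (h : a = a) : eqToHom h = 𝟙 a := rfl

lemma id_sandwich {a b : C} (f : a ⟶ b) : f = 𝟙 a ≫ f ≫ 𝟙 b := by simp

lemma eqToHom_conj2 {a0 a1 a2 b0 b1 b2 : C} (F : a2 ⟶ b0) (p : a0 = a1) (p' : a1 = a2)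
    (q : b0 = b1) (q' : b1 = b2) :
    eqToHom p ≫ (eqToHom p' ≫ F ≫ eqToHom q) ≫ eqToHom q' =
      eqToHom (p.trans p') ≫ F ≫ eqToHom (q.trans q') := by simp

lemma eqToHom_collapse {a a1 b b1 b2 : C} (F : a ⟶ b) (p : a = a1) (p' : a1 = a)
    (q : b = b1) (q' : b1 = b2) (q'' : b2 = b) :
    F = eqToHom p ≫ ((eqToHom p' ≫ F ≫ eqToHom q) ≫ eqToHom q') ≫ eqToHom q'' := by
  subst p q q'; simp

lemma whiskerLeft_eqToHom_comm {a b : C} (h : a = b) {x y : C} (f : x ⟶ y)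
    (h1 : (a ⊗ x : C) = b ⊗ x) (h2 : (a ⊗ y : C) = b ⊗ y) :
    eqToHom h1 ≫ (b ◁ f) = (a ◁ f) ≫ eqToHom h2 := by subst h; simp

lemma leftUnitor_eqToHom_comm {a b : C} (h : a = b)
    (h1 : (𝟙_ C ⊗ a : C) = 𝟙_ C ⊗ b) :
    eqToHom h1 ≫ (λ_ b).hom = (λ_ a).hom ≫ eqToHom h := by subst h; simp

lemma leftUnitor_eqToHom_comm_assoc {a b : C} (h : a = b) {z : C} (g : b ⟶ z)
    (h1 : (𝟙_ C ⊗ a : C) = 𝟙_ C ⊗ b) :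
    eqToHom h1 ≫ (λ_ b).hom ≫ g = (λ_ a).hom ≫ eqToHom h ≫ g := by subst h; simp

/-- Extensionality for intensional sequences. -/
lemma iseq_ext {X Y : Seq C} (p p' : ISeqObj X Y) (h : ∀ n, p.1 n = p'.1 n)
    (h0 : p.2.1 ≫ eqToHom (by rw [h 0]) = p'.2.1)
    (hn : ∀ n, p.2.2 n = eqToHom (by rw [h n]) ≫ p'.2.2 n ≫ eqToHom (by rw [h (n+1)])) :
    p = p' := by
  obtain ⟨M, f0, f⟩ := p
  obtain ⟨M', f0', f'⟩ := p'
  have hM : M = M' := funext h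
  subst hM
  simp only [eqToHom_self, Category.comp_id, Category.id_comp] at h0 hn
  rw [h0]
  congr 2
  exact funext hn

/-- The inverse of the structure map `ISeqStr`. -/
def ISeqUnstr (X Y : Seq C) : PhiObj (ISeqBifunctor C) X Y → ISeqObj X Y :=
  fun p =>
    ⟨fun n => match n with | 0 => p.1 | k + 1 => p.2.2.1 k,
      (λ_ (X 0)).hom ≫ p.2.1,
      fun n => match n with
        | 0 => (λ_ (p.1 ⊗ X 1)).inv ≫ p.2.2.2.1
        | k + 1 => p.2.2.2.2 k⟩

lemma iseq_left_inv (X Y : Seq C) :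
    Function.LeftInverse (ISeqUnstr X Y) (ISeqStr X Y) := by
  rintro ⟨M, f0, f⟩
  apply iseq_ext
  case h => intro n; cases n <;> rfl
  case h0 => simp [ISeqUnstr, ISeqStr]; exact Category.comp_id _
  case hn => intro n; cases n <;> simp [ISeqUnstr, ISeqStr] <;> exact id_sandwich _

lemma iseq_right_inv (X Y : Seq C) :
    Function.RightInverse (ISeqUnstr X Y) (ISeqStr X Y) := by
  rintro ⟨N, g, P, h0, h⟩
  show (⟨N, (λ_ (X 0)).inv ≫ ((λ_ (X 0)).hom ≫ g), _⟩ : PhiObj (ISeqBifunctor C) X Y)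
      = ⟨N, g, P, h0, h⟩
  congr 1
  · simp
    refine Prod.ext rfl ?_
    apply iseq_ext
    case h => intro n; rfl
    case h0 => simp [ISeqStr, ISeqUnstr, eqToHom_self]; exact (Category.comp_id _).trans (Iso.hom_inv_id_assoc _ _)
    case hn => intro n; simp [ISeqStr, ISeqUnstr, eqToHom_self]; exact id_sandwich _

lemma iseq_bijective (X Y : Seq C) : Function.Bijective (ISeqStr (C := C) X Y) :=
  Function.bijective_iff_has_inverse.mpr ⟨ISeqUnstr X Y, iseq_left_inv X Y, iseq_right_inv X Y⟩

end Helpers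
section Terminal

variable {A : Coalg C}

/-- A state: a pair of sequences together with an element of `A.Q` at them. -/
structure St (A : Coalg C) where
  X : Seq C
  Y : Seq C
  q : A.Q.obj X Y

/-- One unfolding step of the coalgebra structure. -/
def nextSt (s : St A) : St A :=
  ⟨consSeq (A.str s.X s.Y s.q).1 (tailSeq s.X), tailSeq s.Y, (A.str s.X s.Y s.q).2.2⟩

/-- Iterated unfolding. -/
def stIter (n : ℕ) : St A → St A :=
  Nat.rec id (fun _ ih s => ih (nextSt s)) n

/-- The memory object produced at stage `n`. -/
def memA (s : St A) (n : ℕ) : C :=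
  (A.str (stIter n s).X (stIter n s).Y (stIter n s).q).1

/-- The morphism produced by the structure map at a state. -/
def g1 (s : St A) : s.X 0 ⟶ memA s 0 ⊗ s.Y 0 :=
  (A.str s.X s.Y s.q).2.1

lemma stIter_zero (s : St A) : stIter 0 s = s := rfl
lemma stIter_succ (n : ℕ) (s : St A) : stIter (n+1) s = stIter n (nextSt s) := rfl

lemma memA_shift (s : St A) (n : ℕ) : memA s (n+1) = memA (nextSt s) n := rfl

lemma stY0 : ∀ (n : ℕ) (s : St A), (stIter n s).Y 0 = s.Y n := by
  intro n
  induction n with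
  | zero => intro s; rfl
  | succ n ih => intro s; exact ih (nextSt s)

lemma stX0 : ∀ (n : ℕ) (s : St A), (stIter (n+1) s).X 0 = memA s n ⊗ s.X (n+1) := by
  intro n
  induction n with
  | zero => intro s; rfl
  | succ n ih => intro s; exact ih (nextSt s)

/-- The intensional-sequence component at stage `n + 1`, normalized. -/
def fA (s : St A) (n : ℕ) : memA s n ⊗ s.X (n+1) ⟶ memA s (n+1) ⊗ s.Y (n+1) :=
  eqToHom (stX0 n s).symm ≫ g1 (stIter (n+1) s) ≫ eqToHom (by rw [stY0 (n+1) s]; rfl)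

lemma fA_shift (s : St A) (n : ℕ) : fA s (n+1) = fA (nextSt s) n := rfl

/-- The canonical map into intensional sequences. -/
def canonApp (s : St A) : ISeqObj s.X s.Y :=
  ⟨fun n => memA s n, (λ_ (s.X 0)).hom ≫ g1 s, fun n => fA s n⟩

end Terminal
section Terminal2
variable {A : Coalg C}

lemma canon_comm (s : St A) :
    ISeqStr s.X s.Y (canonApp s) =
      ⟨(A.str s.X s.Y s.q).1, (A.str s.X s.Y s.q).2.1,
        canonApp (nextSt s)⟩ := by
  show (⟨memA s 0, (λ_ (s.X 0)).inv ≫ ((λ_ (s.X 0)).hom ≫ g1 s),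
      ⟨tailSeq (fun n => memA s n), (λ_ (memA s 0 ⊗ s.X 1)).hom ≫ fA s 0,
        fun n => fA s (n+1)⟩⟩ : PhiObj (ISeqBifunctor C) s.X s.Y) = _
  congr 1
  · simp only [Iso.inv_hom_id_assoc]
    refine Prod.ext rfl ?_
    apply iseq_ext
    case h => intro n; rfl
    case h0 => simp [canonApp, fA, eqToHom_self]; exact (Category.comp_id _).trans (congrArg ((λ_ _).hom ≫ ·) (id_sandwich _).symm)
    case hn => intro n; simp [canonApp, fA_shift, eqToHom_self]; exact id_sandwich _

end Terminal2
section Terminal3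
variable {A : Coalg C}

lemma phi_congr_st {X' Y' : Seq C} {p p' : PhiObj A.Q X' Y'} (h : p = p') :
    (⟨consSeq p.1 (tailSeq X'), tailSeq Y', p.2.2⟩ : St A) =
      ⟨consSeq p'.1 (tailSeq X'), tailSeq Y', p'.2.2⟩ := by subst h; rfl

lemma st_next_map {X' X Y Y' : Seq C} (u : ∀ n, X' n ⟶ X n) (v : ∀ n, Y n ⟶ Y' n)
    (q : A.Q.obj X Y) :
    nextSt (⟨X', Y', A.Q.map u v q⟩ : St A) =
      ⟨consSeq (A.str X Y q).1 (tailSeq X'), tailSeq Y',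
        A.Q.map (consHom (A.str X Y q).1 u) (fun n => v (n + 1)) (A.str X Y q).2.2⟩ :=
  phi_congr_st (A.natural u v q)

lemma mem_nat : ∀ (n : ℕ) {X' X Y Y' : Seq C} (u : ∀ k, X' k ⟶ X k)
    (v : ∀ k, Y k ⟶ Y' k) (q : A.Q.obj X Y),
    memA (⟨X', Y', A.Q.map u v q⟩ : St A) n = memA ⟨X, Y, q⟩ n := by
  intro n
  induction n with
  | zero => intro X' X Y Y' u v q; exact congrArg Sigma.fst (A.natural u v q)
  | succ n ih =>
      intro X' X Y Y' u v q
      show memA (nextSt (⟨X', Y', A.Q.map u v q⟩ : St A)) n = memA (nextSt ⟨X, Y, q⟩) n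
      rw [st_next_map u v q]
      exact ih _ _ _

lemma phi_snd_congr {X Y : Seq C} {p p' : PhiObj A.Q X Y} (h : p = p')
    (c : (p.1 ⊗ Y 0 : C) = p'.1 ⊗ Y 0) :
    p.2.1 ≫ eqToHom c = p'.2.1 := by subst h; simp [eqToHom_self]

lemma g1_map {X' X Y Y' : Seq C} (u : ∀ k, X' k ⟶ X k) (v : ∀ k, Y k ⟶ Y' k)
    (q : A.Q.obj X Y)
    (c : (memA (⟨X', Y', A.Q.map u v q⟩ : St A) 0 ⊗ Y' 0 : C) = (A.str X Y q).1 ⊗ Y' 0) :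
    g1 (⟨X', Y', A.Q.map u v q⟩ : St A) ≫ eqToHom c =
      u 0 ≫ g1 ⟨X, Y, q⟩ ≫ ((A.str X Y q).1 ◁ v 0) :=
  phi_snd_congr (A.natural u v q) c

lemma g1_congr {s t : St A} (h : s = t) (c1 : s.X 0 = t.X 0)
    (c2 : (memA t 0 ⊗ t.Y 0 : C) = memA s 0 ⊗ s.Y 0) :
    g1 s = eqToHom c1 ≫ g1 t ≫ eqToHom c2 := by subst h; simp [eqToHom_self]

lemma fA_congr {s t : St A} (h : s = t) (n : ℕ)
    (d1 : (memA s n ⊗ s.X (n+1) : C) = memA t n ⊗ t.X (n+1))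
    (d2 : (memA t (n+1) ⊗ t.Y (n+1) : C) = memA s (n+1) ⊗ s.Y (n+1)) :
    fA s n = eqToHom d1 ≫ fA t n ≫ eqToHom d2 := by subst h; simp [eqToHom_self]

lemma fA_zero (s : St A) : fA s 0 = g1 (nextSt s) := by
  simp [fA, eqToHom_self]; exact (id_sandwich _).symm

lemma f_nat : ∀ (n : ℕ) {X' X Y Y' : Seq C} (u : ∀ k, X' k ⟶ X k)
    (v : ∀ k, Y k ⟶ Y' k) (q : A.Q.obj X Y)
    (c1 : (memA (⟨X', Y', A.Q.map u v q⟩ : St A) n ⊗ X' (n+1) : C) =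
      memA ⟨X, Y, q⟩ n ⊗ X' (n+1))
    (c2 : (memA (⟨X, Y, q⟩ : St A) (n+1) ⊗ Y' (n+1) : C) =
      memA (⟨X', Y', A.Q.map u v q⟩ : St A) (n+1) ⊗ Y' (n+1)),
    fA (⟨X', Y', A.Q.map u v q⟩ : St A) n =
      eqToHom c1 ≫
        ((memA (⟨X, Y, q⟩ : St A) n ◁ u (n+1)) ≫ fA ⟨X, Y, q⟩ n ≫
          (memA (⟨X, Y, q⟩ : St A) (n+1) ◁ v (n+1))) ≫ eqToHom c2 := by
  intro n
  induction n with
  | zero =>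
      intro X' X Y Y' u v q c1 c2
      have hstep := st_next_map (A := A) u v q
      have e1 : (nextSt (⟨X', Y', A.Q.map u v q⟩ : St A)).X 0 =
          (⟨consSeq (A.str X Y q).1 (tailSeq X'), tailSeq Y',
            A.Q.map (consHom (A.str X Y q).1 u) (fun n => v (n + 1))
              (A.str X Y q).2.2⟩ : St A).X 0 :=
        congrArg (fun z : St A => z.X 0) hstep
      have e3 : (memA (⟨consSeq (A.str X Y q).1 (tailSeq X'), tailSeq Y',
            A.Q.map (consHom (A.str X Y q).1 u) (fun n => v (n + 1))
              (A.str X Y q).2.2⟩ : St A) 0 ⊗ (tailSeq Y') 0 : C) =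
          (A.str (consSeq (A.str X Y q).1 (tailSeq X)) (tailSeq Y) (A.str X Y q).2.2).1
            ⊗ (tailSeq Y') 0 :=
        congrArg (· ⊗ (tailSeq Y') 0)
          (mem_nat 0 (consHom (A.str X Y q).1 u) (fun n => v (n + 1)) (A.str X Y q).2.2)
      have e4 : ((A.str (consSeq (A.str X Y q).1 (tailSeq X)) (tailSeq Y)
            (A.str X Y q).2.2).1 ⊗ (tailSeq Y') 0 : C) =
          memA (nextSt (⟨X', Y', A.Q.map u v q⟩ : St A)) 0 ⊗
            (nextSt (⟨X', Y', A.Q.map u v q⟩ : St A)).Y 0 :=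
        (e3.symm.trans (congrArg (fun z : St A => memA z 0 ⊗ z.Y 0) hstep).symm)
      refine (fA_zero _).trans ((calc g1 (nextSt (⟨X', Y', A.Q.map u v q⟩ : St A))
        _ = eqToHom e1 ≫ g1 (⟨consSeq (A.str X Y q).1 (tailSeq X'), tailSeq Y',
              A.Q.map (consHom (A.str X Y q).1 u) (fun n => v (n + 1))
                (A.str X Y q).2.2⟩ : St A) ≫ eqToHom (e3.trans e4) :=
            g1_congr hstep e1 (e3.trans e4)
        _ = eqToHom e1 ≫ (g1 (⟨consSeq (A.str X Y q).1 (tailSeq X'), tailSeq Y',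
              A.Q.map (consHom (A.str X Y q).1 u) (fun n => v (n + 1))
                (A.str X Y q).2.2⟩ : St A) ≫ eqToHom e3) ≫ eqToHom e4 := by
            simp only [Category.assoc, eqToHom_trans]
        _ = eqToHom e1 ≫ ((consHom (A.str X Y q).1 u 0) ≫
              g1 ⟨consSeq (A.str X Y q).1 (tailSeq X), tailSeq Y, (A.str X Y q).2.2⟩ ≫
              ((A.str (consSeq (A.str X Y q).1 (tailSeq X)) (tailSeq Y)
                (A.str X Y q).2.2).1 ◁ (fun n => v (n + 1)) 0)) ≫ eqToHom e4 :=
            congrArg (fun z => eqToHom e1 ≫ z ≫ eqToHom e4)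
              (g1_map (consHom (A.str X Y q).1 u) (fun n => v (n + 1))
                (A.str X Y q).2.2 e3)).trans ?_)
      rw [fA_zero]
      rfl
  | succ n ih =>
      intro X' X Y Y' u v q c1 c2
      have hstep := st_next_map (A := A) u v q
      have d1 : (memA (nextSt (⟨X', Y', A.Q.map u v q⟩ : St A)) n ⊗
            (nextSt (⟨X', Y', A.Q.map u v q⟩ : St A)).X (n+1) : C) =
          memA (⟨consSeq (A.str X Y q).1 (tailSeq X'), tailSeq Y',
            A.Q.map (consHom (A.str X Y q).1 u) (fun n => v (n + 1))
              (A.str X Y q).2.2⟩ : St A) n ⊗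
            (consSeq (A.str X Y q).1 (tailSeq X')) (n+1) :=
        congrArg (fun z : St A => memA z n ⊗ z.X (n+1)) hstep
      have d2 : (memA (⟨consSeq (A.str X Y q).1 (tailSeq X'), tailSeq Y',
            A.Q.map (consHom (A.str X Y q).1 u) (fun n => v (n + 1))
              (A.str X Y q).2.2⟩ : St A) (n+1) ⊗ (tailSeq Y') (n+1) : C) =
          memA (nextSt (⟨X', Y', A.Q.map u v q⟩ : St A)) (n+1) ⊗
            (nextSt (⟨X', Y', A.Q.map u v q⟩ : St A)).Y (n+1) :=
        (congrArg (fun z : St A => memA z (n+1) ⊗ z.Y (n+1)) hstep).symm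
      have c1' : (memA (⟨consSeq (A.str X Y q).1 (tailSeq X'), tailSeq Y',
            A.Q.map (consHom (A.str X Y q).1 u) (fun n => v (n + 1))
              (A.str X Y q).2.2⟩ : St A) n ⊗
            (consSeq (A.str X Y q).1 (tailSeq X')) (n+1) : C) =
          memA (⟨consSeq (A.str X Y q).1 (tailSeq X), tailSeq Y,
            (A.str X Y q).2.2⟩ : St A) n ⊗
            (consSeq (A.str X Y q).1 (tailSeq X')) (n+1) :=
        congrArg (· ⊗ (consSeq (A.str X Y q).1 (tailSeq X')) (n+1))
          (mem_nat n (consHom (A.str X Y q).1 u) (fun n => v (n + 1)) (A.str X Y q).2.2)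
      have c2' : (memA (⟨consSeq (A.str X Y q).1 (tailSeq X), tailSeq Y,
            (A.str X Y q).2.2⟩ : St A) (n+1) ⊗ (tailSeq Y') (n+1) : C) =
          memA (⟨consSeq (A.str X Y q).1 (tailSeq X'), tailSeq Y',
            A.Q.map (consHom (A.str X Y q).1 u) (fun n => v (n + 1))
              (A.str X Y q).2.2⟩ : St A) (n+1) ⊗ (tailSeq Y') (n+1) :=
        (congrArg (· ⊗ (tailSeq Y') (n+1))
          (mem_nat (n+1) (consHom (A.str X Y q).1 u) (fun n => v (n + 1))
            (A.str X Y q).2.2)).symm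
      refine (fA_congr hstep n d1 d2).trans ((
            congrArg (fun z => eqToHom d1 ≫ z ≫ eqToHom d2)
              (ih (consHom (A.str X Y q).1 u) (fun n => v (n + 1)) (A.str X Y q).2.2 c1' c2')).trans ?_)
      exact eqToHom_conj2 _ _ _ _ _

end Terminal3
section Terminal4
variable {A : Coalg C}

lemma canon_natural {X' X Y Y' : Seq C} (u : ∀ n, X' n ⟶ X n) (v : ∀ n, Y n ⟶ Y' n)
    (q : A.Q.obj X Y) :
    canonApp (⟨X', Y', A.Q.map u v q⟩ : St A) = ISeqMap u v (canonApp ⟨X, Y, q⟩) := by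
  apply iseq_ext
  case h => intro n; exact mem_nat n u v q
  case h0 =>
    show ((λ_ (X' 0)).hom ≫ g1 (⟨X', Y', A.Q.map u v q⟩ : St A)) ≫ eqToHom _ =
      (𝟙_ C ◁ u 0) ≫ ((λ_ (X 0)).hom ≫ g1 ⟨X, Y, q⟩) ≫
        (memA (⟨X, Y, q⟩ : St A) 0 ◁ v 0)
    erw [Category.assoc, g1_map u v q]
    simp only [Category.assoc]
    rw [MonoidalCategory.leftUnitor_naturality_assoc]
    rfl
  case hn =>
    intro n
    exact f_nat n u v q _ _

/-- The canonical coalgebra morphism into intensional sequences. -/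
def canonHom (A : Coalg C) : CoalgHom A (ISeqCoalg C) where
  app := fun X Y q => canonApp ⟨X, Y, q⟩
  natural := fun u v q => canon_natural u v q
  comm := fun X Y q => canon_comm ⟨X, Y, q⟩

end Terminal4
section Uniq
variable {A : Coalg C}

lemma phiI_fst {X Y : Seq C} {p p' : PhiObj (ISeqBifunctor C) X Y} (h : p = p') :
    p.1 = p'.1 := congrArg Sigma.fst h

lemma phiI_mem {X Y : Seq C} {p p' : PhiObj (ISeqBifunctor C) X Y} (h : p = p') :
    p.2.2.1 = p'.2.2.1 := by subst h; rfl

lemma phiI_snd {X Y : Seq C} {p p' : PhiObj (ISeqBifunctor C) X Y} (h : p = p')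
    (c : (p.1 ⊗ Y 0 : C) = p'.1 ⊗ Y 0) :
    p.2.1 ≫ eqToHom c = p'.2.1 := by subst h; simp [eqToHom_self]

lemma phiI_f0 {X Y : Seq C} {p p' : PhiObj (ISeqBifunctor C) X Y} (h : p = p')
    (c1 : (𝟙_ C ⊗ consSeq p'.1 (tailSeq X) 0 : C) = 𝟙_ C ⊗ consSeq p.1 (tailSeq X) 0)
    (c2 : (p.2.2.1 0 ⊗ tailSeq Y 0 : C) = p'.2.2.1 0 ⊗ tailSeq Y 0) :
    eqToHom c1 ≫ p.2.2.2.1 ≫ eqToHom c2 = p'.2.2.2.1 := by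
  subst h; simp [eqToHom_self]

lemma phiI_fn {X Y : Seq C} {p p' : PhiObj (ISeqBifunctor C) X Y} (h : p = p') (n : ℕ)
    (c1 : (p'.2.2.1 n ⊗ consSeq p'.1 (tailSeq X) (n+1) : C) =
      p.2.2.1 n ⊗ consSeq p.1 (tailSeq X) (n+1))
    (c2 : (p.2.2.1 (n+1) ⊗ tailSeq Y (n+1) : C) = p'.2.2.1 (n+1) ⊗ tailSeq Y (n+1)) :
    eqToHom c1 ≫ p.2.2.2.2 n ≫ eqToHom c2 = p'.2.2.2.2 n := by
  subst h; simp [eqToHom_self]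

variable (h : CoalgHom A (ISeqCoalg C))

lemma uniq_mem : ∀ (n : ℕ) {X Y : Seq C} (q : A.Q.obj X Y),
    (h.app X Y q).1 n = memA (⟨X, Y, q⟩ : St A) n := by
  intro n
  induction n with
  | zero =>
      intro X Y q
      exact phiI_fst (h.comm X Y q)
  | succ n ih =>
      intro X Y q
      have hm := congrFun (phiI_mem (h.comm X Y q)) n
      exact hm.trans (ih ((A.str X Y q).2.2))
end Uniq
section Uniq2
variable {A : Coalg C} (h : CoalgHom A (ISeqCoalg C))

lemma uniq_f0 {X Y : Seq C} (q : A.Q.obj X Y)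
    (c : ((h.app X Y q).1 0 ⊗ Y 0 : C) = memA (⟨X, Y, q⟩ : St A) 0 ⊗ Y 0) :
    (h.app X Y q).2.1 ≫ eqToHom c = (λ_ (X 0)).hom ≫ g1 ⟨X, Y, q⟩ := by
  have ps := phiI_snd (h.comm X Y q) c
  calc (h.app X Y q).2.1 ≫ eqToHom c
      = (λ_ (X 0)).hom ≫ (((ISeqCoalg C).str X Y (h.app X Y q)).2.1 ≫ eqToHom c) := by
        rw [show ((ISeqCoalg C).str X Y (h.app X Y q)).2.1 =
          (λ_ (X 0)).inv ≫ (h.app X Y q).2.1 from rfl]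
        exact ((congrArg ((λ_ (X 0)).hom ≫ ·) (Category.assoc _ _ _)).trans (Iso.hom_inv_id_assoc _ _)).symm
    _ = (λ_ (X 0)).hom ≫ g1 ⟨X, Y, q⟩ := congrArg ((λ_ (X 0)).hom ≫ ·) ps
end Uniq2
section Uniq3
variable {A : Coalg C}

lemma uniq_f (h : CoalgHom A (ISeqCoalg C)) : ∀ (n : ℕ) {X Y : Seq C} (q : A.Q.obj X Y)
    (c1 : ((h.app X Y q).1 n ⊗ X (n+1) : C) = memA (⟨X, Y, q⟩ : St A) n ⊗ X (n+1))
    (c2 : (memA (⟨X, Y, q⟩ : St A) (n+1) ⊗ Y (n+1) : C) = (h.app X Y q).1 (n+1) ⊗ Y (n+1)),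
    (h.app X Y q).2.2 n = eqToHom c1 ≫ fA ⟨X, Y, q⟩ n ≫ eqToHom c2 := by
  intro n
  induction n with
  | zero =>
      intro X Y q c1 c2
      have a1 : (𝟙_ C ⊗ consSeq (A.str X Y q).1 (tailSeq X) 0 : C) =
          𝟙_ C ⊗ consSeq ((ISeqCoalg C).str X Y (h.app X Y q)).1 (tailSeq X) 0 :=
        congrArg (fun z => (𝟙_ C ⊗ (z ⊗ X 1) : C)) (uniq_mem h 0 q).symm
      have a2 : (((ISeqCoalg C).str X Y (h.app X Y q)).2.2.1 0 ⊗ tailSeq Y 0 : C) =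
          ((h.app (consSeq (A.str X Y q).1 (tailSeq X)) (tailSeq Y)
            (A.str X Y q).2.2).1 0 ⊗ tailSeq Y 0) :=
        congrArg (fun z => (z ⊗ tailSeq Y 0 : C)) (congrFun (phiI_mem (h.comm X Y q)) 0)
      have pf0 := phiI_f0 (h.comm X Y q) a1 a2
      have c' : ((h.app (consSeq (A.str X Y q).1 (tailSeq X)) (tailSeq Y)
            (A.str X Y q).2.2).1 0 ⊗ tailSeq Y 0 : C) =
          memA (⟨consSeq (A.str X Y q).1 (tailSeq X), tailSeq Y,
            (A.str X Y q).2.2⟩ : St A) 0 ⊗ tailSeq Y 0 :=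
        congrArg (fun z => (z ⊗ tailSeq Y 0 : C)) (uniq_mem h 0 (A.str X Y q).2.2)
      have f0s1 := uniq_f0 h (A.str X Y q).2.2 c'
      have comb := (congrArg (· ≫ eqToHom c') pf0).trans f0s1
      rw [show ((ISeqCoalg C).str X Y (h.app X Y q)).2.2.2.1 =
        (λ_ ((h.app X Y q).1 0 ⊗ X 1)).hom ≫ (h.app X Y q).2.2 0 from rfl] at comb
      rw [fA_zero]
      erw [← cancel_mono (eqToHom a2), ← cancel_mono (eqToHom c'),
        ← cancel_epi ((λ_ ((h.app X Y q).1 0 ⊗ X 1)).hom), ← cancel_epi (eqToHom a1)]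
      simp only [Category.assoc] at comb ⊢
      erw [Category.assoc] at comb ⊢
      erw [Category.assoc] at comb
      erw [comb]
      erw [leftUnitor_eqToHom_comm_assoc (congrArg (· ⊗ X 1) (uniq_mem h 0 q).symm)]
      exact congrArg ((λ_ _).hom ≫ ·) (eqToHom_collapse _ _ _ _ _ _)
  | succ n ih =>
      intro X Y q c1 c2
      have b1 : ((h.app (consSeq (A.str X Y q).1 (tailSeq X)) (tailSeq Y)
            (A.str X Y q).2.2).1 n ⊗
            consSeq (A.str X Y q).1 (tailSeq X) (n+1) : C) =
          (((ISeqCoalg C).str X Y (h.app X Y q)).2.2.1 n ⊗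
            consSeq ((ISeqCoalg C).str X Y (h.app X Y q)).1 (tailSeq X) (n+1)) :=
        congrArg (fun z => (z ⊗ X (n+2) : C)) (congrFun (phiI_mem (h.comm X Y q)) n).symm
      have b2 : (((ISeqCoalg C).str X Y (h.app X Y q)).2.2.1 (n+1) ⊗
            tailSeq Y (n+1) : C) =
          ((h.app (consSeq (A.str X Y q).1 (tailSeq X)) (tailSeq Y)
            (A.str X Y q).2.2).1 (n+1) ⊗ tailSeq Y (n+1)) :=
        congrArg (fun z => (z ⊗ Y (n+2) : C)) (congrFun (phiI_mem (h.comm X Y q)) (n+1))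
      have pfn := phiI_fn (h.comm X Y q) n b1 b2
      have ihs := ih (A.str X Y q).2.2
        (congrArg (fun z => (z ⊗ X (n+2) : C)) (uniq_mem h n (A.str X Y q).2.2))
        (congrArg (fun z => (z ⊗ Y (n+2) : C)) (uniq_mem h (n+1) (A.str X Y q).2.2)).symm
      rw [show ((ISeqCoalg C).str X Y (h.app X Y q)).2.2.2.2 =
        (fun k => (h.app X Y q).2.2 (k+1)) from rfl] at pfn
      rw [ihs] at pfn
      erw [← cancel_mono (eqToHom b2), ← cancel_epi (eqToHom b1)]
      simp only [Category.assoc] at pfn ⊢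
      erw [pfn]
      exact (eqToHom_conj2 _ _ _ _ _).symm
end Uniq3
section Final
variable {A : Coalg C}

lemma uniq_app (h : CoalgHom A (ISeqCoalg C)) (X Y : Seq C) (q : A.Q.obj X Y) :
    h.app X Y q = canonApp ⟨X, Y, q⟩ := by
  apply iseq_ext
  case h => intro n; exact uniq_mem h n q
  case h0 => exact uniq_f0 h q _
  case hn => intro n; exact uniq_f h n q _ _

end Final
/-- **Intensional sequences are the terminal fixpoint / terminal coalgebra of
`(hom ⊡ −)`**: the structure map of `iSeq` is a bijection at every pair of sequences
(so `iSeq` is a fixpoint), and `iSeq` is terminal in the category of coalgebras: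
every coalgebra admits a unique coalgebra morphism into it. -/
theorem iseq_terminal_coalgebra :
    (∀ X Y : Seq C, Function.Bijective (ISeqStr (C := C) X Y)) ∧
    (∀ A : Coalg C,
      Nonempty (CoalgHom A (ISeqCoalg C)) ∧
      ∀ h h' : CoalgHom A (ISeqCoalg C), h.app = h'.app) := by
  constructor
  · exact fun X Y => iseq_bijective X Y
  · intro A
    refine ⟨⟨canonHom A⟩, fun h h' => ?_⟩
    funext X Y q
    rw [uniq_app h, uniq_app h']

end Stmt2
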